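/- Let 1 → ℤ → G̃ →^p Γ → 1 be a central extension with c ∈ Z²(Γ, ℤ) the 2-cocycle induced by a section σ with σ(1)=1. Suppose that every group homomorphism G̃ → ℝ is trivial. Then c, viewed as an ℝ-valued 2-cocycle via the inclusion ℤ ⊂ ℝ, is not a 2-coboundary in Z²(Γ, ℝ). -/
import Mathlib


/-- If every homomorphism G̃ → ℝ is trivial, then the integral 2-cocycle of
    the central extension 1 → ℤ → G̃ → Γ → 1, viewed as an ℝ-valued cocycle,
    is not a 2-coboundary. -/
theorem cocycle_not_real_coboundary
    {G Γ : Type*} [Group G] [Group Γ]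
    (i : Multiplicative ℤ →* G) (hinj : Function.Injective i)
    (hcentral : ∀ a : Multiplicative ℤ, i a ∈ Subgroup.center G)
    (p : G →* Γ) (hsurj : Function.Surjective p)
    (hker : p.ker = i.range)
    (σ : Γ → G) (hsec : ∀ γ : Γ, p (σ γ) = γ) (hσ1 : σ 1 = 1)
    (c : Γ → Γ → Multiplicative ℤ)
    (hc : ∀ g h : Γ, i (c g h) = σ g * σ h * (σ (g * h))⁻¹)
    (htriv : ∀ (f : G →* Multiplicative ℝ) (g : G), f g = 1) :
    ¬ ∃ b : Γ → ℝ, ∀ g h : Γ,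
        ((Multiplicative.toAdd (c g h) : ℤ) : ℝ) = b g + b h - b (g * h) := by
  rintro ⟨b, hb⟩
  -- choose r g with i (r g) = σ (p g) * g⁻¹
  have hmem : ∀ g : G, ∃ a : Multiplicative ℤ, i a = σ (p g) * g⁻¹ := by
    intro g
    have h1 : σ (p g) * g⁻¹ ∈ p.ker := by
      simp [MonoidHom.mem_ker, hsec]
    rw [hker] at h1
    exact h1
  choose r hr using hmem
  -- multiplicativity relation
  have hmul : ∀ g h : G, c (p g) (p h) * r (g * h) = r g * r h := by
    intro g h
    apply hinj
    rw [map_mul, map_mul, hr, hr, hr, hc, map_mul]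
    have hcen := (Subgroup.mem_center_iff.mp (hcentral (r h)))
    have key : σ (p g) * g⁻¹ * (σ (p h) * h⁻¹)
        = σ (p g) * σ (p h) * (g * h)⁻¹ := by
      rw [← hr h]
      calc σ (p g) * g⁻¹ * i (r h) = σ (p g) * (i (r h) * g⁻¹) := by
            rw [mul_assoc, hcen]
        _ = σ (p g) * (σ (p h) * h⁻¹) * g⁻¹ := by rw [hr h]; group
        _ = σ (p g) * σ (p h) * (g * h)⁻¹ := by group
    rw [key, mul_inv_rev]
    group
  -- define the real-valued homomorphism
  have hs : ∀ g h : G,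
      ((Multiplicative.toAdd (r (g * h)) : ℤ) : ℝ) - b (p (g * h))
      = (((Multiplicative.toAdd (r g) : ℤ) : ℝ) - b (p g))
        + (((Multiplicative.toAdd (r h) : ℤ) : ℝ) - b (p h)) := by
    intro g h
    have h1 : (Multiplicative.toAdd (c (p g) (p h)) : ℤ)
        + Multiplicative.toAdd (r (g * h))
        = Multiplicative.toAdd (r g) + Multiplicative.toAdd (r h) := by
      have := hmul g h
      have := congrArg Multiplicative.toAdd this
      simpa using this
    have h2 := hb (p g) (p h)
    have h3 : ((Multiplicative.toAdd (c (p g) (p h)) : ℤ) : ℝ)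
        + ((Multiplicative.toAdd (r (g * h)) : ℤ) : ℝ)
        = ((Multiplicative.toAdd (r g) : ℤ) : ℝ)
          + ((Multiplicative.toAdd (r h) : ℤ) : ℝ) := by
      exact_mod_cast congrArg (fun z : ℤ => (z : ℝ)) h1
    rw [map_mul]
    linarith [h2, h3]
  let f : G →* Multiplicative ℝ := MonoidHom.mk'
    (fun g => Multiplicative.ofAdd
      (((Multiplicative.toAdd (r g) : ℤ) : ℝ) - b (p g)))
    (by
      intro g h
      apply Multiplicative.toAdd.injective
      simpa using hs g h)
  have hzero : ∀ g : G,
      ((Multiplicative.toAdd (r g) : ℤ) : ℝ) - b (p g) = 0 := by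
    intro g
    have := htriv f g
    have := congrArg Multiplicative.toAdd this
    simpa [f] using this
  -- evaluate on central elements
  have hri : ∀ x : Multiplicative ℤ, r (i x) = x⁻¹ := by
    intro x
    apply hinj
    have hpx : p (i x) = 1 := by
      have : i x ∈ p.ker := by rw [hker]; exact ⟨x, rfl⟩
      exact this
    rw [hr, hpx, hσ1, one_mul, map_inv]
  have h0 := hzero (i (Multiplicative.ofAdd (0 : ℤ)))
  have h1 := hzero (i (Multiplicative.ofAdd (1 : ℤ)))
  rw [hri] at h0 h1
  have hp0 : p (i (Multiplicative.ofAdd (0 : ℤ))) = 1 := by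
    have : i (Multiplicative.ofAdd (0 : ℤ)) ∈ p.ker := by
      rw [hker]; exact ⟨_, rfl⟩
    exact this
  have hp1 : p (i (Multiplicative.ofAdd (1 : ℤ))) = 1 := by
    have : i (Multiplicative.ofAdd (1 : ℤ)) ∈ p.ker := by
      rw [hker]; exact ⟨_, rfl⟩
    exact this
  rw [hp0] at h0
  rw [hp1] at h1
  simp at h0 h1
  rw [h0] at h1
  norm_num at h1
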